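/- Let S be an Artinian commutative semiring, let M be an S-semimodule of finite length, and let α : M → M be an S-linear endomorphism. Then α is surjective if and only if α is injective. -/

import Mathlib

/-- The length of an `S`-semimodule `M`: the supremum of all `r : ℕ` such that there exists a
strictly increasing chain `M₀ ⊊ M₁ ⊊ ⋯ ⊊ M_r` of subsemimodules (i.e. `S`-submodules) of `M`. -/
noncomputable def semimoduleLength (S M : Type*) [Semiring S] [AddCommMonoid M]
    [Module S M] : ℕ∞ :=
  ⨆ r : {r : ℕ // ∃ c : Fin (r + 1) → Submodule S M, StrictMono c}, ((r : ℕ) : ℕ∞)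

/-- A commutative semiring `S` is Artinian if every finitely generated `S`-semimodule has
finite length. -/
def IsArtinianSemiring (S : Type u) [CommSemiring S] : Prop :=
  ∀ (M : Type u) [AddCommMonoid M] [Module S M], Module.Finite S M →
    semimoduleLength S M ≠ ⊤

section Aux

variable {S : Type*} [Semiring S]

/-- Finite length gives a uniform bound on lengths of strict chains of submodules. -/
lemma semimoduleLength_bound {M : Type*} [AddCommMonoid M] [Module S M]
    (hM : semimoduleLength S M ≠ ⊤) :
    ∃ N : ℕ, ∀ (r : ℕ) (c : Fin (r + 1) → Submodule S M), StrictMono c → r ≤ N := by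
  lift semimoduleLength S M to ℕ using hM with N hN
  refine ⟨N, fun r c hc => ?_⟩
  have h : ((r : ℕ) : ℕ∞) ≤ semimoduleLength S M :=
    le_iSup (fun r : {r : ℕ // ∃ c : Fin (r + 1) → Submodule S M, StrictMono c} =>
      ((r : ℕ) : ℕ∞)) ⟨r, c, hc⟩
  rw [← hN] at h
  exact_mod_cast h

/-- Finite length implies every monotone chain of submodules stabilizes. -/
lemma semimoduleLength_monotone_stabilizes {M : Type*} [AddCommMonoid M] [Module S M]
    (hM : semimoduleLength S M ≠ ⊤) (f : ℕ →o Submodule S M) :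
    ∃ n, ∀ m, n ≤ m → f n = f m := by
  obtain ⟨N, hN⟩ := semimoduleLength_bound hM
  by_contra h
  push_neg at h
  choose g hg hg' using h
  -- build a strictly increasing sequence
  let u : ℕ → ℕ := fun k => Nat.rec 0 (fun _ n => g n) k
  have hu : ∀ k, f (u k) < f (u (k + 1)) := by
    intro k
    exact lt_of_le_of_ne (f.monotone (hg (u k))) (hg' (u k))
  have hsm : StrictMono (fun k => f (u k)) := strictMono_nat_of_lt_succ hu
  have hc : StrictMono (fun i : Fin (N + 1 + 1) => f (u i)) := by
    intro i j hij
    exact hsm hij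
  exact absurd (hN (N + 1) _ hc) (by omega)

/-- Finite length implies every antitone chain of submodules stabilizes at some step. -/
lemma semimoduleLength_antitone_step {M : Type*} [AddCommMonoid M] [Module S M]
    (hM : semimoduleLength S M ≠ ⊤) (f : ℕ → Submodule S M)
    (hf : ∀ n, f (n + 1) ≤ f n) : ∃ n, f (n + 1) = f n := by
  obtain ⟨N, hN⟩ := semimoduleLength_bound hM
  by_contra h
  push_neg at h
  have hs : StrictAnti f := strictAnti_nat_of_succ_lt fun n => lt_of_le_of_ne (hf n) (h n)
  have hc : StrictMono (fun i : Fin (N + 1 + 1) => f (N + 1 - (i : ℕ))) := by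
    intro i j hij
    apply hs
    have hi := i.isLt
    have hj := j.isLt
    omega
  exact absurd (hN (N + 1) _ hc) (by omega)

/-- Finite semimodule length is invariant under linear equivalence (one inequality). -/
lemma semimoduleLength_le_of_equiv {M N : Type*} [AddCommMonoid M] [Module S M]
    [AddCommMonoid N] [Module S N] (e : M ≃ₗ[S] N) :
    semimoduleLength S M ≤ semimoduleLength S N := by
  apply iSup_le
  rintro ⟨r, c, hc⟩
  exact le_iSup (fun r : {r : ℕ // ∃ c : Fin (r + 1) → Submodule S N, StrictMono c} =>
    ((r : ℕ) : ℕ∞)) ⟨r, fun i => Submodule.orderIsoMapComap e (c i),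
      (Submodule.orderIsoMapComap e).strictMono.comp hc⟩

lemma semimoduleLength_eq_of_equiv {M N : Type*} [AddCommMonoid M] [Module S M]
    [AddCommMonoid N] [Module S N] (e : M ≃ₗ[S] N) :
    semimoduleLength S M = semimoduleLength S N :=
  le_antisymm (semimoduleLength_le_of_equiv e) (semimoduleLength_le_of_equiv e.symm)

end Aux

/-- Over an Artinian commutative semiring, an endomorphism of a finite-length semimodule is
surjective if and only if it is injective. -/
theorem surjective_iff_injective {S : Type u} [CommSemiring S] (hS : IsArtinianSemiring S)
    {M : Type v} [AddCommMonoid M] [Module S M] (hM : semimoduleLength S M ≠ ⊤)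
    (α : M →ₗ[S] M) : Function.Surjective α ↔ Function.Injective α := by
  constructor
  · -- surjective → injective
    intro hsurj
    -- M is Noetherian, hence finitely generated
    haveI : IsNoetherian S M :=
      monotone_stabilizes_iff_noetherian.mp (semimoduleLength_monotone_stabilizes hM)
    obtain ⟨n, v, hv⟩ := Module.Finite.exists_fin (R := S) (M := M)
    set π : (Fin n →₀ S) →ₗ[S] M := Finsupp.linearCombination S v with hπdef
    have hπ : Function.Surjective π := by
      rw [← LinearMap.range_eq_top, hπdef, Finsupp.range_linearCombination, hv]
    -- a universe-u copy of M
    let Q : Type u := Quotient (Setoid.ker ⇑π)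
    let e : Q ≃ M := Setoid.quotientKerEquivOfSurjective ⇑π hπ
    letI : AddCommMonoid Q := e.addCommMonoid
    letI : Module S Q := e.module S
    let eL : Q ≃ₗ[S] M := e.linearEquiv S
    haveI : Module.Finite S Q := Module.Finite.equiv eL.symm
    haveI : Module.Finite S (Q × Q) := Module.Finite.prod
    have hMM : semimoduleLength S (M × M) ≠ ⊤ := by
      rw [← semimoduleLength_eq_of_equiv (eL.prodCongr eL)]
      exact hS (Q × Q) inferInstance
    -- the diagonal and the chain of its preimages
    set d : M →ₗ[S] M × M := LinearMap.prod LinearMap.id LinearMap.id with hd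
    set Δ : Submodule S (M × M) := LinearMap.range d with hΔ
    have hmemΔ : ∀ x y : M, (x, y) ∈ Δ ↔ x = y := by
      intro x y
      constructor
      · rintro ⟨z, hz⟩
        simp only [hd, LinearMap.prod_apply, Pi.prod, LinearMap.id_apply] at hz
        obtain ⟨h1, h2⟩ := Prod.mk.injEq .. ▸ hz
        rw [← h1, ← h2]
      · rintro rfl
        exact ⟨x, by simp [hd]⟩
    set β : M × M →ₗ[S] M × M := α.prodMap α with hβ
    have hβsurj : Function.Surjective β := by
      rintro ⟨a, b⟩
      obtain ⟨x, hx⟩ := hsurj a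
      obtain ⟨y, hy⟩ := hsurj b
      exact ⟨(x, y), by simp [hβ, hx, hy]⟩
    have hβpow : ∀ k : ℕ, Function.Surjective ⇑(β ^ k) := by
      intro k
      induction k with
      | zero => simpa [Module.End.coe_one] using Function.surjective_id
      | succ k ih =>
        intro p
        obtain ⟨q, hq⟩ := hβsurj p
        obtain ⟨r, hr⟩ := ih q
        exact ⟨r, by rw [pow_succ', Module.End.mul_apply, hr, hq]⟩
    have hΔβ : ∀ p : M × M, p ∈ Δ → β p ∈ Δ := by
      rintro ⟨x, y⟩ hp
      rw [hmemΔ] at hp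
      subst hp
      rw [show β (x, x) = (α x, α x) by simp [hβ]]
      rw [hmemΔ]
    let f : ℕ →o Submodule S (M × M) :=
      ⟨fun k => Submodule.comap (β ^ k) Δ, by
        apply monotone_nat_of_le_succ
        intro k p hp
        simp only [Submodule.mem_comap] at hp ⊢
        rw [pow_succ', Module.End.mul_apply]
        exact hΔβ _ hp⟩
    obtain ⟨k, hk⟩ := semimoduleLength_monotone_stabilizes hMM f
    intro x y hxy
    obtain ⟨⟨a, b⟩, hab⟩ := hβpow k (x, y)
    have h1 : (a, b) ∈ f (k + 1) := by
      show (β ^ (k + 1)) (a, b) ∈ Δ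
      rw [pow_succ', Module.End.mul_apply, hab]
      rw [show β (x, y) = (α x, α y) by simp [hβ], hmemΔ]
      exact hxy
    rw [← hk (k + 1) (Nat.le_succ k)] at h1
    have h2 : (β ^ k) (a, b) ∈ Δ := h1
    rw [hab, hmemΔ] at h2
    exact h2
  · -- injective → surjective
    intro hinj
    have hpowinj : ∀ k : ℕ, Function.Injective ⇑(α ^ k) := by
      intro k
      induction k with
      | zero => simpa [Module.End.coe_one] using Function.injective_id
      | succ k ih =>
        intro a b hab
        rw [pow_succ', Module.End.mul_apply, Module.End.mul_apply] at hab
        exact ih (hinj hab)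
    have hdec : ∀ k : ℕ, LinearMap.range (α ^ (k + 1)) ≤ LinearMap.range (α ^ k) := by
      rintro k _ ⟨w, rfl⟩
      exact ⟨α w, by rw [pow_succ, Module.End.mul_apply]⟩
    obtain ⟨k, hk⟩ := semimoduleLength_antitone_step hM (fun k => LinearMap.range (α ^ k)) hdec
    intro y
    have h1 : (α ^ k) y ∈ LinearMap.range (α ^ k) := ⟨y, rfl⟩
    rw [← hk] at h1
    obtain ⟨z, hz⟩ := h1
    refine ⟨z, hpowinj k ?_⟩
    rw [← hz, pow_succ, Module.End.mul_apply]
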